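/- arXiv:0810.1146 — 4 statements merged into one kernel-verified Lean document; each statement's English description precedes it below -/
import Mathlib

section
/- For all real numbers x and y, |power_p(x,y)| ≤ p · min(|x|, |y|). -/
noncomputable def powerp (p : ℕ) (x y : ℝ) : ℝ :=
  if x + y = 0 then 0
  else ((Real.sign x + Real.sign y) / 2) * ((x + y) / 2) * (1 - |(x - y) / (x + y)| ^ p)

lemma powerp_neg_neg (p : ℕ) (x y : ℝ) : powerp p (-x) (-y) = powerp p x y := by
  unfold powerp
  have h : -x + -y = -(x + y) := by ring
  rw [h]
  by_cases hxy : x + y = 0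
  · simp [hxy]
  · rw [if_neg (by intro hc; apply hxy; linarith), if_neg hxy, Real.sign_neg, Real.sign_neg]
    have h2 : (-x - -y) / -(x + y) = (x - y) / (x + y) := by
      rw [show -x - -y = -(x - y) by ring, neg_div_neg_eq]
    rw [h2]
    ring

lemma powerp_pos_bound (p : ℕ) (hp : 1 ≤ p) (x y : ℝ) (hx : 0 < x) (hy : 0 < y) :
    |powerp p x y| ≤ (p : ℝ) * min x y := by
  have hxy : 0 < x + y := by linarith
  have hxy' : x + y ≠ 0 := ne_of_gt hxy
  set r : ℝ := |(x - y) / (x + y)| with hr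
  have hr0 : 0 ≤ r := abs_nonneg _
  have hr1 : r ≤ 1 := by
    rw [hr, abs_div, abs_of_pos hxy, div_le_one hxy, abs_le]
    constructor <;> nlinarith [abs_nonneg (x - y)]
  have hpow1 : r ^ p ≤ 1 := pow_le_one₀ hr0 hr1
  have hpow0 : 0 ≤ r ^ p := pow_nonneg hr0 p
  have hsx := Real.sign_of_pos hx
  have hsy := Real.sign_of_pos hy
  have hval : powerp p x y = (x + y) / 2 * (1 - r ^ p) := by
    unfold powerp
    rw [if_neg hxy', hsx, hsy, hr]
    ring
  have hbern : 1 - r ^ p ≤ (p : ℝ) * (1 - r) := by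
    have h := one_add_mul_le_pow (by linarith : (-2 : ℝ) ≤ r - 1) p
    have h1 : (1 + (r - 1)) = r := by ring
    rw [h1] at h
    nlinarith [h]
  have hmin : min x y = ((x + y) - |x - y|) / 2 := by
    rcases le_total x y with h | h
    · rw [min_eq_left h, abs_of_nonpos (by linarith)]; ring
    · rw [min_eq_right h, abs_of_nonneg (by linarith)]; ring
  have hrval : (x + y) / 2 * (1 - r) = min x y := by
    rw [hr, abs_div, abs_of_pos hxy, hmin]
    field_simp
  rw [hval, abs_of_nonneg (by nlinarith)]
  have hmul := mul_le_mul_of_nonneg_left hbern (by positivity : (0 : ℝ) ≤ (x + y) / 2)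
  nlinarith [hmul, hrval]

theorem abs_powerp_le_min (p : ℕ) (hp : 1 ≤ p) (x y : ℝ) :
    |powerp p x y| ≤ (p : ℝ) * min |x| |y| := by
  have hrhs : (0 : ℝ) ≤ (p : ℝ) * min |x| |y| := by positivity
  by_cases hxy : x + y = 0
  · simpa [powerp, hxy] using hrhs
  rcases lt_trichotomy x 0 with hx | hx | hx
  · rcases lt_trichotomy y 0 with hy | hy | hy
    · -- both negative
      have := powerp_pos_bound p hp (-x) (-y) (by linarith) (by linarith)
      rw [powerp_neg_neg] at this
      simpa [abs_of_neg hx, abs_of_neg hy] using this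
    · -- y = 0
      subst hy
      have hx0 : x ≠ 0 := by simpa using hxy
      have h1 : (x - 0) / (x + 0) = 1 := by
        rw [sub_zero, add_zero, div_self hx0]
      have : powerp p x 0 = 0 := by
        unfold powerp
        rw [if_neg hxy, h1]
        simp [one_pow]
      rw [this]
      simpa using hrhs
    · -- x < 0 < y : opposite signs
      have : powerp p x y = 0 := by
        unfold powerp
        rw [if_neg hxy, Real.sign_of_neg hx, Real.sign_of_pos hy]
        ring
      rw [this]
      simpa using hrhs
  · -- x = 0
    subst hx
    have hy0 : y ≠ 0 := by simpa using hxy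
    have h1 : (0 - y) / (0 + y) = -1 := by
      rw [zero_sub, zero_add, neg_div, div_self hy0]
    have : powerp p 0 y = 0 := by
      unfold powerp
      rw [if_neg hxy, h1]
      simp
    rw [this]
    simpa using hrhs
  · rcases lt_trichotomy y 0 with hy | hy | hy
    · -- y < 0 < x : opposite signs
      have : powerp p x y = 0 := by
        unfold powerp
        rw [if_neg hxy, Real.sign_of_neg hy, Real.sign_of_pos hx]
        ring
      rw [this]
      simpa using hrhs
    · -- y = 0
      subst hy
      have hx0 : x ≠ 0 := by simpa using hxy
      have h1 : (x - 0) / (x + 0) = 1 := by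
        rw [sub_zero, add_zero, div_self hx0]
      have : powerp p x 0 = 0 := by
        unfold powerp
        rw [if_neg hxy, h1]
        simp
      rw [this]
      simpa using hrhs
    · -- both positive
      have := powerp_pos_bound p hp x y hx hy
      simpa [abs_of_pos hx, abs_of_pos hy] using this
end

section
/- For the Power-p subdivision scheme S with p ≥ 5 applied to a bounded sequence f, at even indices one has |D(S(f))_{2n}| ≤ (3/4) · sup_k |Df_k|, where D(S(f))_{2n} = S(f)_{2n-1} - 2f_n + S(f)_{2n+1}. -/
/-- Second difference operator. -/
def D (f : ℤ → ℝ) (n : ℤ) : ℝ := f (n + 1) - 2 * f n + f (n - 1)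

lemma abs_powerp_le (p : ℕ) (x y : ℝ) : |powerp p x y| ≤ max |x| |y| := by
  unfold powerp
  split_ifs with h
  · simp [le_max_iff, abs_nonneg]
  · by_cases hs : Real.sign x + Real.sign y = 0
    · simp [hs, le_max_iff, abs_nonneg]
    · have hxy : 0 ≤ x * y := by
        by_contra hneg
        push_neg at hneg
        rcases mul_neg_iff.mp hneg with ⟨hx, hy⟩ | ⟨hx, hy⟩
        · rw [Real.sign_of_pos hx, Real.sign_of_neg hy] at hs; norm_num at hs
        · rw [Real.sign_of_neg hx, Real.sign_of_pos hy] at hs; norm_num at hs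
      have ht : |(x - y) / (x + y)| ≤ 1 := by
        rw [abs_div, div_le_one (abs_pos.2 h)]
        nlinarith [sq_abs (x - y), sq_abs (x + y), abs_nonneg (x - y), abs_nonneg (x + y)]
      have htp : |(x - y) / (x + y)| ^ p ≤ 1 := pow_le_one₀ (abs_nonneg _) ht
      have h3 : |1 - |(x - y) / (x + y)| ^ p| ≤ 1 := by
        rw [abs_le]
        constructor <;> nlinarith [pow_nonneg (abs_nonneg ((x - y) / (x + y))) p]
      have h1 : |(Real.sign x + Real.sign y) / 2| ≤ 1 := by
        rcases Real.sign_apply_eq x with hx | hx | hx <;>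
          rcases Real.sign_apply_eq y with hy | hy | hy <;>
          rw [hx, hy] <;> norm_num [abs_div]
      have h2 : |(x + y) / 2| ≤ max |x| |y| := by
        rw [abs_div]
        have : |x + y| ≤ |x| + |y| := abs_add_le x y
        have hx : |x| ≤ max |x| |y| := le_max_left _ _
        have hy : |y| ≤ max |x| |y| := le_max_right _ _
        rw [abs_of_pos (by norm_num : (0:ℝ) < 2)]
        linarith
      calc |(Real.sign x + Real.sign y) / 2 * ((x + y) / 2) * (1 - |(x - y) / (x + y)| ^ p)|
          = |(Real.sign x + Real.sign y) / 2| * |(x + y) / 2| * |1 - |(x - y) / (x + y)| ^ p| := by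
            rw [abs_mul, abs_mul]
        _ ≤ 1 * max |x| |y| * 1 := by
            apply mul_le_mul _ h3 (abs_nonneg _) (by positivity)
            exact mul_le_mul h1 h2 (abs_nonneg _) (by norm_num)
        _ = max |x| |y| := by ring

/-- For the Power-p scheme with `p ≥ 5`, at even indices
`|D(S f)_{2n}| = |S(f)_{2n-1} - 2 f_n + S(f)_{2n+1}| ≤ (3/4) ⨆ k, |Df_k|`,
where `Sodd n` denotes `S(f)_{2n+1}`. -/
theorem powerp_scheme_D_even (p : ℕ) (hp : 5 ≤ p) (f : ℤ → ℝ)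
    (hf : ∃ C, ∀ n, |f n| ≤ C) (Sodd : ℤ → ℝ)
    (hS : ∀ m, Sodd m = (f m + f (m + 1)) / 2 - (1 / 8) * powerp p (D f m) (D f (m + 1)))
    (n : ℤ) :
    |Sodd (n - 1) - 2 * f n + Sodd n| ≤ (3 / 4) * ⨆ k, |D f k| := by
  obtain ⟨C, hC⟩ := hf
  have hbdd : BddAbove (Set.range fun k => |D f k|) := by
    refine ⟨4 * C, ?_⟩
    rintro _ ⟨k, rfl⟩
    have h1 := hC (k + 1); have h2 := hC k; have h3 := hC (k - 1)
    have := abs_abs (f k)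
    simp only [D]
    calc |f (k + 1) - 2 * f k + f (k - 1)| ≤ |f (k + 1)| + 2 * |f k| + |f (k - 1)| := by
          have := abs_add_le (f (k + 1) - 2 * f k) (f (k - 1))
          have := abs_sub (f (k + 1)) (2 * f k)
          have : |f (k+1) - 2 * f k| ≤ |f (k+1)| + |2 * f k| := abs_sub _ _
          rw [abs_mul] at this
          have h4 := abs_add_le (f (k + 1) - 2 * f k) (f (k - 1))
          simp only [abs_two] at this
          linarith
      _ ≤ 4 * C := by linarith
  set M := ⨆ k, |D f k| with hM
  have hle : ∀ k, |D f k| ≤ M := fun k => le_ciSup hbdd k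
  have e1 := hS (n - 1)
  have e2 := hS n
  rw [show n - 1 + 1 = n by ring] at e1
  set P1 := powerp p (D f (n - 1)) (D f n) with hP1
  set P2 := powerp p (D f n) (D f (n + 1)) with hP2
  have key : Sodd (n - 1) - 2 * f n + Sodd n
      = D f n / 2 - (1 / 8) * (P1 + P2) := by
    rw [e1, e2]; simp only [D]; ring
  rw [key]
  have hb1 : |P1| ≤ M := (abs_powerp_le p _ _).trans (max_le (hle _) (hle _))
  have hb2 : |P2| ≤ M := (abs_powerp_le p _ _).trans (max_le (hle _) (hle _))
  have hn : |D f n| ≤ M := hle n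
  calc |D f n / 2 - 1 / 8 * (P1 + P2)| ≤ |D f n| / 2 + (|P1| + |P2|) / 8 := by
        have h1 : |D f n / 2 - 1 / 8 * (P1 + P2)| ≤ |D f n / 2| + |1 / 8 * (P1 + P2)| :=
          abs_sub _ _
        have h2 : |1 / 8 * (P1 + P2)| ≤ 1 / 8 * (|P1| + |P2|) := by
          rw [abs_mul]
          have := abs_add_le P1 P2
          have : |(1:ℝ) / 8| = 1 / 8 := by norm_num
          rw [this]
          nlinarith [abs_add_le P1 P2]
        rw [abs_div] at h1
        simp only [abs_two] at h1
        have : |(2:ℝ)| = 2 := abs_two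
        nlinarith [abs_add_le P1 P2]
    _ ≤ (3 / 4) * M := by linarith
end

section
/- Suppose S_NL = S + F∘δ is an interpolatory scheme where: S is linear with S(f)_{2n} = f_n, F satisfies ‖F(d)‖_∞ ≤ M‖d‖_∞ for some M > 0, and there exists c < 1 with ‖δ(S(f)) + δ(F(δf))‖_∞ ≤ c‖δf‖_∞ for all bounded f. Then for every bounded sequence f⁰ and the iterates fʲ = S_NL^j(f⁰), one has ‖S_NL(fʲ) − S(fʲ)‖_∞ ≤ M·cʲ·‖δf⁰‖_∞ for all j ≥ 0. -/
open scoped BoundedContinuousFunction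

/-- Convergence estimate for a nonlinear scheme `S_NL = S + F ∘ δ` that is a perturbation of a
linear interpolatory scheme `S`: for the iterates `fʲ = S_NL^[j] f⁰`,
`‖S_NL(fʲ) − S(fʲ)‖_∞ ≤ M · cʲ · ‖δ f⁰‖_∞`. Here `ℓ^∞` is modeled by `ℤ →ᵇ ℝ`. -/
theorem perturbed_scheme_estimate
    (S δ : (ℤ →ᵇ ℝ) →L[ℝ] (ℤ →ᵇ ℝ)) (F : (ℤ →ᵇ ℝ) → (ℤ →ᵇ ℝ))
    (SNL : (ℤ →ᵇ ℝ) → (ℤ →ᵇ ℝ))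
    (hSNL : ∀ f, SNL f = S f + F (δ f))
    (hinterp : ∀ (f : ℤ →ᵇ ℝ) (n : ℤ), SNL f (2 * n) = f n)
    (M : ℝ) (hM : 0 < M) (hF : ∀ dd : ℤ →ᵇ ℝ, ‖F dd‖ ≤ M * ‖dd‖)
    (c : ℝ) (hc : c < 1)
    (hcontr : ∀ f : ℤ →ᵇ ℝ, ‖δ (S f) + δ (F (δ f))‖ ≤ c * ‖δ f‖)
    (f0 : ℤ →ᵇ ℝ) (j : ℕ) :
    ‖SNL (SNL^[j] f0) - S (SNL^[j] f0)‖ ≤ M * c ^ j * ‖δ f0‖ := by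
  have hstep : ∀ f : ℤ →ᵇ ℝ, ‖δ (SNL f)‖ ≤ c * ‖δ f‖ := by
    intro f
    rw [hSNL f, map_add]
    exact hcontr f
  rcases le_or_gt 0 c with hc0 | hc0
  · -- c ≥ 0 : induction on j
    have key : ∀ k : ℕ, ‖δ (SNL^[k] f0)‖ ≤ c ^ k * ‖δ f0‖ := by
      intro k
      induction k with
      | zero => simp
      | succ n ih =>
        rw [Function.iterate_succ_apply']
        calc ‖δ (SNL (SNL^[n] f0))‖ ≤ c * ‖δ (SNL^[n] f0)‖ := hstep _
          _ ≤ c * (c ^ n * ‖δ f0‖) := by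
              exact mul_le_mul_of_nonneg_left ih hc0
          _ = c ^ (n + 1) * ‖δ f0‖ := by ring
    have : SNL (SNL^[j] f0) - S (SNL^[j] f0) = F (δ (SNL^[j] f0)) := by
      rw [hSNL]; abel
    rw [this]
    calc ‖F (δ (SNL^[j] f0))‖ ≤ M * ‖δ (SNL^[j] f0)‖ := hF _
      _ ≤ M * (c ^ j * ‖δ f0‖) := mul_le_mul_of_nonneg_left (key j) hM.le
      _ = M * c ^ j * ‖δ f0‖ := by ring
  · -- c < 0 : then δ f = 0 for all f
    have hzero : ∀ f : ℤ →ᵇ ℝ, δ f = 0 := by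
      intro f
      have h1 : (0:ℝ) ≤ c * ‖δ f‖ := le_trans (norm_nonneg _) (hstep f)
      have h2 : ‖δ f‖ ≤ 0 := nonpos_of_mul_nonneg_right h1 hc0
      exact norm_le_zero_iff.mp h2
    have : SNL (SNL^[j] f0) - S (SNL^[j] f0) = F (δ (SNL^[j] f0)) := by
      rw [hSNL]; abel
    rw [this, hzero, hzero]
    have : ‖F (0 : ℤ →ᵇ ℝ)‖ ≤ M * ‖(0 : ℤ →ᵇ ℝ)‖ := hF 0
    simpa using this
end

section
/- Suppose S_NL(f)_{2n+1} = S(f)_{2n+1} + F(δf)_{2n+1}, S_NL(f)_{2n} = f_n, where δ is a bounded linear operator on ℓ^∞, F is Lipschitz: ‖F(d₁)−F(d₂)‖_∞ ≤ M‖d₁−d₂‖_∞, and S_NL is contractive relative to δ: there is c < 1 with ‖δ(S_NL f − S_NL g)‖_∞ ≤ c‖δ(f−g)‖_∞ for all bounded f, g. Given details d^k (k = 0,…,j−1) and initial data f⁰, define f^{k+1} by f^{k+1}_{2n} = f^k_n and f^{k+1}_{2n+1} = S_NL(f^k)_{2n+1} + d^k_n, and similarly for f̃ with data f̃⁰, d̃^k.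 Then ∑_{k=1}^{j} ‖δ(f^{k−1}) − δ(f̃^{k−1})‖_∞ ≤ (1/(1−c)) (‖δ f⁰ − δ f̃⁰‖_∞ + ∑_{l=0}^{j−2} ‖δ d^l − δ d̃^l‖_∞). -/
open scoped BoundedContinuousFunction

/-- Stability estimate: under Lipschitz continuity of `F` and contractivity of `δ ∘ S_NL`,
the sums of differences of `δ`-values of two multiresolution reconstructions are controlled by
the initial data and the details.  Here `ℓ^∞` is modeled by `ℤ →ᵇ ℝ`, and `f^{k+1} = S_NL(f^k) + d^k`
with the detail sequence `d^k` injected at odd positions (so `f^{k+1}_{2n} = f^k_n` and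
`f^{k+1}_{2n+1} = S_NL(f^k)_{2n+1} + d^k_n`). -/
theorem stability_sum_estimate
    (S δ : (ℤ →ᵇ ℝ) →L[ℝ] (ℤ →ᵇ ℝ)) (F : (ℤ →ᵇ ℝ) → (ℤ →ᵇ ℝ))
    (SNL : (ℤ →ᵇ ℝ) → (ℤ →ᵇ ℝ))
    (hSNLodd : ∀ (u : ℤ →ᵇ ℝ) (n : ℤ), SNL u (2 * n + 1) = S u (2 * n + 1) + F (δ u) (2 * n + 1))
    (hSNLeven : ∀ (u : ℤ →ᵇ ℝ) (n : ℤ), SNL u (2 * n) = u n)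
    (M : ℝ) (hF : ∀ d₁ d₂ : ℤ →ᵇ ℝ, ‖F d₁ - F d₂‖ ≤ M * ‖d₁ - d₂‖)
    (c : ℝ) (hc : c < 1)
    (hcontr : ∀ u v : ℤ →ᵇ ℝ, ‖δ (SNL u - SNL v)‖ ≤ c * ‖δ (u - v)‖)
    (f g d e : ℕ → (ℤ →ᵇ ℝ))
    (hfrec : ∀ k, f (k + 1) = SNL (f k) + d k)
    (hgrec : ∀ k, g (k + 1) = SNL (g k) + e k)
    (j : ℕ) :
    ∑ k ∈ Finset.range j, ‖δ (f k) - δ (g k)‖ ≤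
      (1 / (1 - c)) * (‖δ (f 0) - δ (g 0)‖ + ∑ l ∈ Finset.range (j - 1), ‖δ (d l) - δ (e l)‖) := by
  have hone : (0:ℝ) < 1 - c := by linarith
  rcases lt_or_ge c 0 with hcneg | hcpos
  · -- degenerate case: contractivity with negative c forces δ to be constant (hence 0 on diffs)
    have hz : ∀ u v : ℤ →ᵇ ℝ, ‖δ u - δ v‖ = 0 := by
      intro u v
      have h := hcontr u v
      have h0 : (0:ℝ) ≤ ‖δ (SNL u - SNL v)‖ := norm_nonneg _
      have h1 : ‖δ (u - v)‖ ≤ 0 := by nlinarith [norm_nonneg (δ (u - v))]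
      have h2 : δ (u - v) = 0 := norm_eq_zero.mp (le_antisymm h1 (norm_nonneg _))
      rw [map_sub] at h2
      rw [sub_eq_zero.mp h2, sub_self, norm_zero]
    simp [hz]
  · set a : ℕ → ℝ := fun k => ‖δ (f k) - δ (g k)‖ with ha
    set b : ℕ → ℝ := fun k => ‖δ (d k) - δ (e k)‖ with hb
    have hrec : ∀ k, a (k + 1) ≤ c * a k + b k := by
      intro k
      have h1 : δ (f (k + 1)) - δ (g (k + 1))
          = δ (SNL (f k) - SNL (g k)) + (δ (d k) - δ (e k)) := by
        rw [hfrec, hgrec, map_add, map_add, map_sub]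
        abel
      have h2 : a (k + 1) = ‖δ (SNL (f k) - SNL (g k)) + (δ (d k) - δ (e k))‖ := by
        rw [ha]; simp only []; rw [h1]
      rw [h2]
      calc ‖δ (SNL (f k) - SNL (g k)) + (δ (d k) - δ (e k))‖
          ≤ ‖δ (SNL (f k) - SNL (g k))‖ + ‖δ (d k) - δ (e k)‖ := norm_add_le _ _
        _ ≤ c * ‖δ (f k - g k)‖ + b k := by
            have := hcontr (f k) (g k); rw [hb]; simp only []; linarith
        _ = c * a k + b k := by rw [map_sub, ha]
    have key : ∀ m, (1 - c) * (∑ k ∈ Finset.range (m + 1), a k) + c * a m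
        ≤ a 0 + ∑ l ∈ Finset.range m, b l := by
      intro m
      induction m with
      | zero => simp [Finset.sum_range_one]; ring_nf; simp
      | succ n ih =>
        have hsa : ∑ k ∈ Finset.range (n + 2), a k
            = (∑ k ∈ Finset.range (n + 1), a k) + a (n + 1) := Finset.sum_range_succ a (n + 1)
        have hsb : ∑ l ∈ Finset.range (n + 1), b l
            = (∑ l ∈ Finset.range n, b l) + b n := Finset.sum_range_succ b n
        have h := hrec n
        rw [hsa, hsb]
        nlinarith
    cases j with
    | zero =>
      simp only [Finset.range_zero, Finset.sum_empty, Nat.zero_sub]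
      have h1 : (0:ℝ) ≤ a 0 := norm_nonneg _
      positivity
    | succ m =>
      have h := key m
      have h0 : 0 ≤ a m := norm_nonneg _
      have hcm : 0 ≤ c * a m := mul_nonneg hcpos h0
      have hmm : m + 1 - 1 = m := rfl
      rw [hmm, one_div, inv_mul_eq_div, le_div_iff₀ hone]
      nlinarith
end
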